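/- Achievability of the second octagon edge: for every integer k with 0 ≤ k ≤ Neg(B), there exists a classifier h (predicting the unfavourable class on all of the privileged group A, the correct label on all positives of the unprivileged group B, and the favourable class on exactly k true-negative instances of B) such that Acc(h) = 1 − (Pos(A) + k)/|D| and SPD(h) = −Pos(B)/|B| − k/|B|. Hence every lattice point on the segment between the second and third octagon vertices is achieved, the endpoint k = Neg(B) giving SPD(h) = −1. -/

import Mathlib

open Finset

variable {α : Type*} [DecidableEq α]

/-- Number of instances in `S` whose true label is the favourable class `+`. -/
def PosCount (y : α → Bool) (S : Finset α) : ℕ := (S.filter fun x => y x = true).card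

/-- Number of instances in `S` whose true label is the unfavourable class `−`. -/
def NegCount (y : α → Bool) (S : Finset α) : ℕ := (S.filter fun x => y x = false).card

/-- Predicted favourable rate of classifier `h` on `S`. -/
noncomputable def pPlus (h : α → Bool) (S : Finset α) : ℝ :=
  (S.filter fun x => h x = true).card / S.card

/-- Predicted unfavourable rate of classifier `h` on `S`. -/
noncomputable def pMinus (h : α → Bool) (S : Finset α) : ℝ :=
  (S.filter fun x => h x = false).card / S.card

/-- Accuracy of classifier `h` on dataset `D` with ground truth `y`. -/
noncomputable def Accuracy (y : α → Bool) (D : Finset α) (h : α → Bool) : ℝ :=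
  (D.filter fun x => h x = y x).card / D.card

/-- Statistical Parity Difference of classifier `h`, privileged group `A`,
unprivileged group `D \ A`. -/
noncomputable def SPD (D A : Finset α) (h : α → Bool) : ℝ :=
  pPlus h A - pPlus h (D \ A)

/-- achievability of the second octagon edge.  For every
`0 ≤ k ≤ NegCount(B)` the classifier predicting the unfavourable class on all of
`A`, the correct label on all positives of `B = D \ A`, and the favourable
class on exactly `k` true-negative instances of `B` has
`Accuracy = 1 - (PosCount(A)+k)/|D|` and `SPD = -PosCount(B)/|B| - k/|B|`. -/
theorem octagon_second_edge_achievable (D A : Finset α) (y : α → Bool)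
    (hSub : A ⊆ D) (hD : D.Nonempty) (hA : A.Nonempty) (hB : (D \ A).Nonempty)
    (k : ℕ) (hk : k ≤ NegCount y (D \ A)) :
    ∃ (h : α → Bool) (K : Finset α),
      K ⊆ (D \ A).filter (fun x => y x = false) ∧ K.card = k ∧
      (∀ x ∈ A, h x = false) ∧ (∀ x ∈ K, h x = true) ∧
      (∀ x ∈ D \ A, x ∉ K → h x = y x) ∧
      Accuracy y D h = 1 - ((PosCount y A : ℝ) + (k : ℝ)) / D.card ∧
      SPD D A h = -((PosCount y (D \ A) : ℝ) / (D \ A).card) - (k : ℝ) / (D \ A).card := by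
  classical
  obtain ⟨K, hKsub, hKcard⟩ := Finset.exists_subset_card_eq hk
  set B := D \ A with hBdef
  have hKB : K ⊆ B := hKsub.trans (Finset.filter_subset _ _)
  have hKneg : ∀ x ∈ K, y x = false := fun x hx => by
    simpa using (Finset.mem_filter.1 (hKsub hx)).2
  have hKnotA : ∀ x ∈ A, x ∉ K := fun x hx hxK =>
    (Finset.mem_sdiff.1 (hKB hxK)).2 hx
  refine ⟨fun x => if x ∈ K then true else if x ∈ A then false else y x, K, hKsub, hKcard,
    ?_, ?_, ?_, ?_, ?_⟩
  · intro x hx; simp [hKnotA x hx, hx]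
  · intro x hx; simp [hx]
  · intro x hx hxK
    simp [hxK, (Finset.mem_sdiff.1 hx).2]
  all_goals
    set h : α → Bool := fun x => if x ∈ K then true else if x ∈ A then false else y x with hh
  -- Accuracy
  · have hAfilter : A.filter (fun x => h x = y x) = A.filter (fun x => y x = false) := by
      apply Finset.filter_congr
      intro x hx
      simp only [hh, if_neg (hKnotA x hx), if_pos hx]
      cases y x <;> simp
    have hBfilter : B.filter (fun x => h x = y x) = B \ K := by
      ext x
      simp only [Finset.mem_filter, Finset.mem_sdiff]
      constructor
      · rintro ⟨hxB, hxe⟩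
        refine ⟨hxB, fun hxK => ?_⟩
        rw [hh] at hxe
        simp [hxK, hKneg x hxK] at hxe
      · rintro ⟨hxB, hxK⟩
        have hxA : x ∉ A := (Finset.mem_sdiff.1 hxB).2
        exact ⟨hxB, by simp [hh, hxK, hxA]⟩
    have hDsplit : D.filter (fun x => h x = y x)
        = A.filter (fun x => h x = y x) ∪ B.filter (fun x => h x = y x) := by
      rw [← Finset.filter_union, Finset.union_sdiff_of_subset hSub]
    have hdisj : Disjoint (A.filter (fun x => h x = y x)) (B.filter (fun x => h x = y x)) :=
      Finset.disjoint_filter_filter (Finset.disjoint_sdiff)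
    have hcard : (D.filter (fun x => h x = y x)).card
        = NegCount y A + (B.card - k) := by
      rw [hDsplit, Finset.card_union_of_disjoint hdisj, hAfilter, hBfilter,
        Finset.card_sdiff_of_subset hKB, hKcard]
      rfl
    have hAsplit : (PosCount y A : ℕ) + NegCount y A = A.card := by
      simpa [PosCount, NegCount] using
        Finset.card_filter_add_card_filter_not (s := A) (p := fun x => y x = true)
    have hDcard : A.card + B.card = D.card := by
      have := Finset.card_le_card hSub
      rw [hBdef, Finset.card_sdiff_of_subset hSub]
      omega
    have hkB : k ≤ B.card := hk.trans (Finset.card_filter_le _ _)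
    have hDpos : (0:ℝ) < D.card := by
      exact_mod_cast Finset.card_pos.2 hD
    rw [Accuracy, hcard]
    rw [Nat.cast_add, Nat.cast_sub hkB]
    have h1 : (NegCount y A : ℝ) = (A.card : ℝ) - PosCount y A := by
      have := hAsplit; push_cast [← this]; ring
    have h2 : (D.card : ℝ) = (A.card : ℝ) + B.card := by exact_mod_cast hDcard.symm
    rw [h1, h2]
    have hne : (A.card : ℝ) + B.card ≠ 0 := by rw [← h2]; positivity
    field_simp
    ring
  -- SPD
  · have hApos : A.filter (fun x => h x = true) = ∅ := by
      apply Finset.filter_false_of_mem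
      intro x hx
      simp [hh, hKnotA x hx, hx]
    have hBpos : B.filter (fun x => h x = true) = K ∪ B.filter (fun x => y x = true) := by
      ext x
      simp only [Finset.mem_filter, Finset.mem_union]
      constructor
      · rintro ⟨hxB, hxe⟩
        by_cases hxK : x ∈ K
        · exact Or.inl hxK
        · right
          have hxA : x ∉ A := (Finset.mem_sdiff.1 hxB).2
          rw [hh] at hxe
          simp [hxK, hxA] at hxe
          exact ⟨hxB, hxe⟩
      · rintro (hxK | ⟨hxB, hxy⟩)
        · exact ⟨hKB hxK, by simp [hh, hxK]⟩
        · have hxA : x ∉ A := (Finset.mem_sdiff.1 hxB).2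
          by_cases hxK : x ∈ K
          · exact ⟨hxB, by simp [hh, hxK]⟩
          · exact ⟨hxB, by simp [hh, hxK, hxA, hxy]⟩
    have hdisj2 : Disjoint K (B.filter (fun x => y x = true)) := by
      rw [Finset.disjoint_left]
      intro x hxK hxf
      have := hKneg x hxK
      have := (Finset.mem_filter.1 hxf).2
      simp_all
    have hBposcard : (B.filter (fun x => h x = true)).card = k + PosCount y B := by
      rw [hBpos, Finset.card_union_of_disjoint hdisj2, hKcard]
      rfl
    have hBpos' : (0:ℝ) < B.card := by
      exact_mod_cast Finset.card_pos.2 hB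
    rw [SPD, pPlus, pPlus, hApos, ← hBdef, hBposcard]
    push_cast [Finset.card_empty]
    field_simp
    ring
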